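/- Let b, c, m : ℝ → ℝ be smooth, let u : ℝ² → ℝ be a smooth solution of the wave equation F[u] = 0, and let p, q : ℝ² → ℝ be smooth functions with L[u]p = 0 (p is a symmetry characteristic along u) and L*[u]q = 0 (q is an adjoint-symmetry along u) on ℝ². Then the current Ψᵗ = q·∂ₜp + (b(u)·q − ∂ₜq)·p, Ψˣ = −q·∂ₓp + (c(u)·q + ∂ₓq)·p is divergence-free: ∂ₜΨᵗ + ∂ₓΨˣ = 0 on ℝ². -/

import Mathlib

noncomputable section

open Real

/-- Partial derivative in the first (time) variable. -/
def Dt (u : ℝ → ℝ → ℝ) : ℝ → ℝ → ℝ := fun t x => deriv (fun s => u s x) t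

/-- Partial derivative in the second (space) variable. -/
def Dx (u : ℝ → ℝ → ℝ) : ℝ → ℝ → ℝ := fun t x => deriv (fun s => u t s) x

/-- Smoothness (C^∞) of a function of two real variables. -/
def Smooth2 (u : ℝ → ℝ → ℝ) : Prop := ContDiff ℝ (⊤ : ℕ∞) (fun p : ℝ × ℝ => u p.1 p.2)
/-- The semilinear wave operator F[u] = ∂ₜ²u − ∂ₓ²u + b(u)∂ₜu + c(u)∂ₓu + m(u). -/
def Fop (b c m : ℝ → ℝ) (u : ℝ → ℝ → ℝ) : ℝ → ℝ → ℝ := fun t x =>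
  Dt (Dt u) t x - Dx (Dx u) t x + b (u t x) * Dt u t x + c (u t x) * Dx u t x + m (u t x)

/-- The adjoint linearized operator along u:
L*[u]q = ∂ₜ²q − ∂ₓ²q − b(u)∂ₜq − c(u)∂ₓq + m′(u)q. -/
def Lstar (b c m : ℝ → ℝ) (u q : ℝ → ℝ → ℝ) : ℝ → ℝ → ℝ := fun t x =>
  Dt (Dt q) t x - Dx (Dx q) t x - b (u t x) * Dt q t x - c (u t x) * Dx q t x
    + deriv m (u t x) * q t x
/-- The linearized wave operator along u:
L[u]p = ∂ₜ²p − ∂ₓ²p + b(u)∂ₜp + c(u)∂ₓp + (b′(u)∂ₜu + c′(u)∂ₓu + m′(u))p. -/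
def Lop (b c m : ℝ → ℝ) (u p : ℝ → ℝ → ℝ) : ℝ → ℝ → ℝ := fun t x =>
  Dt (Dt p) t x - Dx (Dx p) t x + b (u t x) * Dt p t x + c (u t x) * Dx p t x
    + (deriv b (u t x) * Dt u t x + deriv c (u t x) * Dx u t x + deriv m (u t x)) * p t x

lemma slice_t {u : ℝ → ℝ → ℝ} (hu : Smooth2 u) (x : ℝ) :
    ContDiff ℝ (⊤ : ℕ∞) (fun s => u s x) :=
  hu.comp (contDiff_id.prodMk contDiff_const)

lemma slice_x {u : ℝ → ℝ → ℝ} (hu : Smooth2 u) (t : ℝ) :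
    ContDiff ℝ (⊤ : ℕ∞) (fun s => u t s) :=
  hu.comp (contDiff_const.prodMk contDiff_id)

lemma Dt_eq_fderiv {u : ℝ → ℝ → ℝ} (hu : Smooth2 u) (t x : ℝ) :
    Dt u t x = fderiv ℝ (fun p : ℝ × ℝ => u p.1 p.2) (t, x) (1, 0) := by
  have h1 : HasFDerivAt (fun p : ℝ × ℝ => u p.1 p.2)
      (fderiv ℝ (fun p : ℝ × ℝ => u p.1 p.2) (t, x)) (t, x) :=
    (hu.differentiable (by simp) (t, x)).hasFDerivAt
  have h2 : HasDerivAt (fun s : ℝ => (s, x)) ((1 : ℝ), (0 : ℝ)) t :=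
    (hasDerivAt_id t).prodMk (hasDerivAt_const t x)
  exact (h1.comp_hasDerivAt t h2).deriv

lemma Dx_eq_fderiv {u : ℝ → ℝ → ℝ} (hu : Smooth2 u) (t x : ℝ) :
    Dx u t x = fderiv ℝ (fun p : ℝ × ℝ => u p.1 p.2) (t, x) (0, 1) := by
  have h1 : HasFDerivAt (fun p : ℝ × ℝ => u p.1 p.2)
      (fderiv ℝ (fun p : ℝ × ℝ => u p.1 p.2) (t, x)) (t, x) :=
    (hu.differentiable (by simp) (t, x)).hasFDerivAt
  have h2 : HasDerivAt (fun s : ℝ => (t, s)) ((0 : ℝ), (1 : ℝ)) x :=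
    (hasDerivAt_const x t).prodMk (hasDerivAt_id x)
  exact (h1.comp_hasDerivAt x h2).deriv

lemma smooth2_Dt {u : ℝ → ℝ → ℝ} (hu : Smooth2 u) : Smooth2 (Dt u) := by
  have h : ContDiff ℝ (⊤ : ℕ∞) (fun p : ℝ × ℝ =>
      fderiv ℝ (fun p : ℝ × ℝ => u p.1 p.2) p (1, 0)) :=
    (hu.fderiv_right (by exact_mod_cast le_top)).clm_apply contDiff_const
  have e : (fun p : ℝ × ℝ => Dt u p.1 p.2)
      = fun p : ℝ × ℝ => fderiv ℝ (fun p : ℝ × ℝ => u p.1 p.2) p (1, 0) :=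
    funext fun p => Dt_eq_fderiv hu p.1 p.2
  rw [Smooth2, e]; exact h

lemma smooth2_Dx {u : ℝ → ℝ → ℝ} (hu : Smooth2 u) : Smooth2 (Dx u) := by
  have h : ContDiff ℝ (⊤ : ℕ∞) (fun p : ℝ × ℝ =>
      fderiv ℝ (fun p : ℝ × ℝ => u p.1 p.2) p (0, 1)) :=
    (hu.fderiv_right (by exact_mod_cast le_top)).clm_apply contDiff_const
  have e : (fun p : ℝ × ℝ => Dx u p.1 p.2)
      = fun p : ℝ × ℝ => fderiv ℝ (fun p : ℝ × ℝ => u p.1 p.2) p (0, 1) :=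
    funext fun p => Dx_eq_fderiv hu p.1 p.2
  rw [Smooth2, e]; exact h

lemma hasDerivAt_t {u : ℝ → ℝ → ℝ} (hu : Smooth2 u) (t x : ℝ) :
    HasDerivAt (fun s => u s x) (Dt u t x) t :=
  ((slice_t hu x).differentiable (by simp) t).hasDerivAt

lemma hasDerivAt_x {u : ℝ → ℝ → ℝ} (hu : Smooth2 u) (t x : ℝ) :
    HasDerivAt (fun s => u t s) (Dx u t x) x :=
  ((slice_x hu t).differentiable (by simp) x).hasDerivAt

/-- The symmetry/adjoint-symmetry conservation law formula: if p is a symmetry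
characteristic and q an adjoint-symmetry along a solution u, the current
(Ψᵗ, Ψˣ) is divergence-free. -/
theorem stmt_10
    (b c m : ℝ → ℝ)
    (hb : ContDiff ℝ (⊤ : ℕ∞) b) (hc : ContDiff ℝ (⊤ : ℕ∞) c) (hm : ContDiff ℝ (⊤ : ℕ∞) m)
    (u : ℝ → ℝ → ℝ) (hu : Smooth2 u) (hsol : ∀ t x, Fop b c m u t x = 0)
    (p q : ℝ → ℝ → ℝ) (hp : Smooth2 p) (hq : Smooth2 q)
    (hsymm : ∀ t x, Lop b c m u p t x = 0)
    (hadj : ∀ t x, Lstar b c m u q t x = 0) :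
    ∀ t x : ℝ,
      Dt (fun t x => q t x * Dt p t x + (b (u t x) * q t x - Dt q t x) * p t x) t x
      + Dx (fun t x => -(q t x) * Dx p t x + (c (u t x) * q t x + Dx q t x) * p t x) t x
        = 0 := by
  intro t x
  have hbu : HasDerivAt (fun s => b (u s x)) (deriv b (u t x) * Dt u t x) t :=
    ((hb.differentiable (by simp) (u t x)).hasDerivAt).comp t
      (hasDerivAt_t hu t x)
  have hcu : HasDerivAt (fun s => c (u t s)) (deriv c (u t x) * Dx u t x) x :=
    ((hc.differentiable (by simp) (u t x)).hasDerivAt).comp x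
      (hasDerivAt_x hu t x)
  have Ht : HasDerivAt
      (fun s => q s x * Dt p s x + (b (u s x) * q s x - Dt q s x) * p s x)
      (Dt q t x * Dt p t x + q t x * Dt (Dt p) t x
        + ((deriv b (u t x) * Dt u t x * q t x + b (u t x) * Dt q t x - Dt (Dt q) t x) * p t x
          + (b (u t x) * q t x - Dt q t x) * Dt p t x)) t :=
    ((hasDerivAt_t hq t x).mul (hasDerivAt_t (smooth2_Dt hp) t x)).add
      (((hbu.mul (hasDerivAt_t hq t x)).sub (hasDerivAt_t (smooth2_Dt hq) t x)).mul
        (hasDerivAt_t hp t x))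
  have Hx : HasDerivAt
      (fun s => -(q t s) * Dx p t s + (c (u t s) * q t s + Dx q t s) * p t s)
      (-(Dx q t x) * Dx p t x + -(q t x) * Dx (Dx p) t x
        + ((deriv c (u t x) * Dx u t x * q t x + c (u t x) * Dx q t x + Dx (Dx q) t x) * p t x
          + (c (u t x) * q t x + Dx q t x) * Dx p t x)) x :=
    (((hasDerivAt_x hq t x).neg).mul (hasDerivAt_x (smooth2_Dx hp) t x)).add
      (((hcu.mul (hasDerivAt_x hq t x)).add (hasDerivAt_x (smooth2_Dx hq) t x)).mul
        (hasDerivAt_x hp t x))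
  have e1 : Dt (fun t x => q t x * Dt p t x + (b (u t x) * q t x - Dt q t x) * p t x) t x
      = Dt q t x * Dt p t x + q t x * Dt (Dt p) t x
        + ((deriv b (u t x) * Dt u t x * q t x + b (u t x) * Dt q t x - Dt (Dt q) t x) * p t x
          + (b (u t x) * q t x - Dt q t x) * Dt p t x) := Ht.deriv
  have e2 : Dx (fun t x => -(q t x) * Dx p t x + (c (u t x) * q t x + Dx q t x) * p t x) t x
      = -(Dx q t x) * Dx p t x + -(q t x) * Dx (Dx p) t x
        + ((deriv c (u t x) * Dx u t x * q t x + c (u t x) * Dx q t x + Dx (Dx q) t x) * p t x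
          + (c (u t x) * q t x + Dx q t x) * Dx p t x) := Hx.deriv
  rw [e1, e2]
  have h1 := hsymm t x
  have h2 := hadj t x
  simp only [Lop, Lstar] at h1 h2
  linear_combination q t x * h1 - p t x * h2
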